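/- Let D be a probability distribution on ℝ^d × [0, 1] whose marginal on ℝ^d is N(0, I_d). Let w* ∈ ℝ^d be a unit vector, let opt = E_{(x,y)∼D}[(ReLU(w*·x) − y)²], and let α > 0. Suppose w ∈ ℝ^d is a unit vector with P_{(x,y)∼D}[sign(y − α) ≠ sign(w·x)] ≤ β for some β ≥ 0. Then E_{(x,y)∼D}[(ReLU(w·x) − y)²] ≤ 2·opt + 2π²·(β + opt/α² + 2α)². In particular, taking α = opt^{1/3}, any unit vector w whose 0/1 error on the α-thresholded labels is at most β satisfies E[(ReLU(w·x) − y)²] ≤ 2·opt + 2π²·(β + 3·opt^{1/3})². -/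

import Mathlib

open MeasureTheory ProbabilityTheory Real

/-- `ReLU(a) = max(0, a)`. -/
noncomputable def relu (a : ℝ) : ℝ := max 0 a

/-- `sign(a) = 1` if `a ≥ 0` and `-1` otherwise. -/
noncomputable def sgn (a : ℝ) : ℝ := if 0 ≤ a then 1 else -1

/-- The standard Gaussian measure `N(0, I_d)` on `ℝ^d`. -/
noncomputable def stdGaussianPi (d : ℕ) : Measure (Fin d → ℝ) :=
  Measure.pi fun _ => gaussianReal 0 1

open scoped ENNReal NNReal

instance stdGaussianPi_prob (d : ℕ) : IsProbabilityMeasure (stdGaussianPi d) := by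
  unfold stdGaussianPi; infer_instance

lemma measurable_sgn : Measurable sgn :=
  Measurable.ite (measurableSet_le measurable_const measurable_id) measurable_const
    measurable_const

lemma sgn_of_nonneg {a : ℝ} (h : 0 ≤ a) : sgn a = 1 := if_pos h
lemma sgn_of_neg {a : ℝ} (h : a < 0) : sgn a = -1 := if_neg (not_le.2 h)

lemma sgn_mul_pos {r : ℝ} (hr : 0 < r) (a : ℝ) : sgn (r * a) = sgn a := by
  unfold sgn
  rcases le_or_gt 0 a with h | h
  · rw [if_pos h, if_pos (mul_nonneg hr.le h)]
  · rw [if_neg (not_le.2 h), if_neg (not_le.2 (mul_neg_of_pos_of_neg hr h))]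

lemma lintegral_pi_prod : ∀ (n : ℕ) (g : Fin n → ℝ → ℝ≥0∞), (∀ i, Measurable (g i)) →
    ∫⁻ x : Fin n → ℝ, ∏ i, g i (x i) ∂(Measure.pi fun _ => (volume : Measure ℝ))
      = ∏ i, ∫⁻ y, g i y := by
  intro n
  induction n with
  | zero =>
      intro g hg
      simp [lintegral_const, Measure.pi_empty_univ]
  | succ n ih =>
      intro g hg
      have h := (measurePreserving_piFinSuccAbove (fun _ : Fin (n+1) => (volume : Measure ℝ)) 0)
      have hmeas : Measurable fun z : ℝ × (Fin n → ℝ) => g 0 z.1 * ∏ i, g i.succ (z.2 i) :=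
        ((hg 0).comp measurable_fst).mul
          (Finset.measurable_prod _ fun i _ => (hg i.succ).comp ((measurable_pi_apply i).comp measurable_snd))
      have key : ∫⁻ x : Fin (n+1) → ℝ, ∏ i, g i (x i) ∂(Measure.pi fun _ => (volume : Measure ℝ))
          = ∫⁻ z : ℝ × (Fin n → ℝ), g 0 z.1 * ∏ i : Fin n, g i.succ (z.2 i)
              ∂((volume : Measure ℝ).prod (Measure.pi fun _ => (volume : Measure ℝ))) := by
        rw [← h.lintegral_comp hmeas]
        refine lintegral_congr fun x => ?_
        simp [MeasurableEquiv.piFinSuccAbove_apply, Fin.prod_univ_succ, Fin.tail]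
      have hfact := lintegral_prod_mul (μ := (volume : Measure ℝ))
        (ν := Measure.pi fun _ : Fin n => (volume : Measure ℝ)) (f := g 0)
        (g := fun y : Fin n → ℝ => ∏ i, g i.succ (y i)) ((hg 0).aemeasurable)
        ((Finset.measurable_prod _ fun i _ => (hg i.succ).comp (measurable_pi_apply i)).aemeasurable)
      rw [key, hfact, ih (fun i => g i.succ) (fun i => hg i.succ), Fin.prod_univ_succ]

lemma stdGaussianPi_eq (d : ℕ) :
    stdGaussianPi d
      = (volume : Measure (Fin d → ℝ)).withDensity (fun x => ∏ i, gaussianPDF 0 1 (x i)) := by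
  refine Measure.pi_eq fun s hs => ?_
  rw [withDensity_apply _ (MeasurableSet.univ_pi hs)]
  have hind : ∀ x : Fin d → ℝ,
      (Set.univ.pi s).indicator (fun x => ∏ i, gaussianPDF 0 1 (x i)) x
        = ∏ i, ((s i).indicator (gaussianPDF 0 1)) (x i) := by
    intro x
    by_cases hx : x ∈ Set.univ.pi s
    · rw [Set.indicator_of_mem hx]
      refine Finset.prod_congr rfl fun i _ => ?_
      rw [Set.indicator_of_mem (hx i (Set.mem_univ i))]
    · rw [Set.indicator_of_notMem hx]
      rw [Set.mem_pi] at hx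
      push_neg at hx
      obtain ⟨i, _, hi⟩ := hx
      exact (Finset.prod_eq_zero (Finset.mem_univ i)
        (by rw [Set.indicator_of_notMem hi])).symm
  rw [← lintegral_indicator (MeasurableSet.univ_pi hs) _, lintegral_congr hind, volume_pi,
    lintegral_pi_prod d _ (fun i => (measurable_gaussianPDF 0 1).indicator (hs i))]
  refine Finset.prod_congr rfl fun i _ => ?_
  rw [lintegral_indicator (hs i) _, gaussianReal_apply 0 one_ne_zero]

lemma map_withDensity_equiv {A B : Type*} [MeasurableSpace A] [MeasurableSpace B]
    (μ : Measure A) (e : A ≃ᵐ B) (f : A → ℝ≥0∞) (hf : Measurable f) :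
    (μ.withDensity f).map e = (μ.map e).withDensity (fun y => f (e.symm y)) := by
  ext s hs
  rw [Measure.map_apply e.measurable hs, withDensity_apply _ hs,
    withDensity_apply _ (e.measurable hs),
    setLIntegral_map (f := fun y => f (e.symm y)) hs (hf.comp e.symm.measurable) e.measurable]
  refine lintegral_congr fun x => ?_
  rw [e.symm_apply_apply]

section Stage2
variable {d : ℕ}

lemma euclid_sum_sq (y : EuclideanSpace ℝ (Fin d)) : ∑ i, (y i)^2 = ‖y‖^2 := by
  rw [EuclideanSpace.norm_eq, Real.sq_sqrt (Finset.sum_nonneg fun i _ => sq_nonneg _)]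
  exact Finset.sum_congr rfl fun i _ => by rw [Real.norm_eq_abs, sq_abs]

lemma prod_gaussianPDF (x : Fin d → ℝ) :
    (∏ i, gaussianPDF 0 1 (x i))
      = ENNReal.ofReal ((Real.sqrt (2*π))⁻¹ ^ d * Real.exp (-(∑ i, (x i)^2)/2)) := by
  have hpdf : ∀ t : ℝ, gaussianPDFReal 0 1 t = (Real.sqrt (2*π))⁻¹ * Real.exp (-(t^2)/2) := by
    intro t
    simp [gaussianPDFReal, sub_zero]
  have h1 : ∀ i, gaussianPDF 0 1 (x i) = ENNReal.ofReal (gaussianPDFReal 0 1 (x i)) :=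
    fun i => rfl
  simp only [h1]
  rw [← ENNReal.ofReal_prod_of_nonneg (fun i _ => gaussianPDFReal_nonneg 0 1 (x i))]
  congr 1
  simp only [hpdf]
  rw [Finset.prod_mul_distrib, Finset.prod_const, ← Real.exp_sum]
  congr 2
  · simp
  · rw [← Finset.sum_div]
    congr 1
    simp
    
noncomputable def basisMap (b : OrthonormalBasis (Fin d) ℝ (EuclideanSpace ℝ (Fin d))) :
    (Fin d → ℝ) ≃ᵐ (Fin d → ℝ) :=
  ((MeasurableEquiv.toLp 2 (Fin d → ℝ)).trans
    b.repr.toHomeomorph.toMeasurableEquiv).trans (MeasurableEquiv.toLp 2 (Fin d → ℝ)).symm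

lemma basisMap_apply (b : OrthonormalBasis (Fin d) ℝ (EuclideanSpace ℝ (Fin d)))
    (x : Fin d → ℝ) (i : Fin d) : basisMap b x i = ∑ j, b i j * x j := by
  show b.repr ((MeasurableEquiv.toLp 2 (Fin d → ℝ)) x) i = _
  rw [OrthonormalBasis.repr_apply_apply, PiLp.inner_apply]
  exact Finset.sum_congr rfl fun j _ => by
    simp [RCLike.inner_apply, starRingEnd_apply]; ring

lemma basisMap_symm_sum_sq (b : OrthonormalBasis (Fin d) ℝ (EuclideanSpace ℝ (Fin d)))
    (x : Fin d → ℝ) : ∑ i, ((basisMap b).symm x i)^2 = ∑ i, (x i)^2 := by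
  have h1 : ∑ i, ((basisMap b).symm x i)^2
      = ‖b.repr.symm ((MeasurableEquiv.toLp 2 (Fin d → ℝ)) x)‖^2 := by
    exact euclid_sum_sq _
  have h2 : ∑ i, (x i)^2 = ‖(MeasurableEquiv.toLp 2 (Fin d → ℝ)) x‖^2 :=
    euclid_sum_sq _
  rw [h1, h2, LinearIsometryEquiv.norm_map]

lemma stdGaussianPi_map_basisMap (b : OrthonormalBasis (Fin d) ℝ (EuclideanSpace ℝ (Fin d))) :
    (stdGaussianPi d).map (basisMap b) = stdGaussianPi d := by
  have hmp : MeasurePreserving (basisMap b) (volume : Measure (Fin d → ℝ)) volume := by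
    have h1 := (EuclideanSpace.volume_preserving_symm_measurableEquiv_toLp (Fin d)).symm
    have h2 := (b.repr : EuclideanSpace ℝ (Fin d) ≃ₗᵢ[ℝ] EuclideanSpace ℝ (Fin d)).measurePreserving
    have h3 := EuclideanSpace.volume_preserving_symm_measurableEquiv_toLp (Fin d)
    exact (h3.comp h2).comp h1
  have hdens : Measurable fun x : Fin d → ℝ => ∏ i, gaussianPDF 0 1 (x i) :=
    Finset.measurable_prod _ fun i _ =>
      (measurable_gaussianPDF 0 1).comp (measurable_pi_apply i)
  rw [stdGaussianPi_eq, map_withDensity_equiv _ (basisMap b) _ hdens, hmp.map_eq]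
  congr 1
  funext y
  rw [prod_gaussianPDF, prod_gaussianPDF, basisMap_symm_sum_sq]

end Stage2

section Stage3
variable {d : ℕ}

lemma measurable_form (c : Fin d → ℝ) : Measurable fun x : Fin d → ℝ => ∑ i, c i * x i :=
  Finset.measurable_sum _ fun i _ => (measurable_pi_apply i).const_mul _

lemma map_eval_pi (i : Fin d) : (stdGaussianPi d).map (fun x => x i) = gaussianReal 0 1 := by
  ext s hs
  rw [Measure.map_apply (measurable_pi_apply i) hs]
  have hpre : (fun x : Fin d → ℝ => x i) ⁻¹' s
      = Set.univ.pi (Function.update (fun _ : Fin d => (Set.univ : Set ℝ)) i s) := by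
    ext x
    simp only [Set.mem_preimage, Set.mem_pi, Set.mem_univ, true_implies]
    constructor
    · intro hx j
      rcases eq_or_ne j i with rfl | hj
      · rwa [Function.update_self]
      · rw [Function.update_of_ne hj]; trivial
    · intro hx
      have := hx i
      rwa [Function.update_self] at this
  rw [hpre]
  show (Measure.pi fun _ => gaussianReal 0 1) _ = _
  rw [Measure.pi_pi,
    Finset.prod_eq_single i (fun j _ hj => by rw [Function.update_of_ne hj]; exact measure_univ)
      (fun h => absurd (Finset.mem_univ i) h), Function.update_self]

lemma map_pair_pi (i j : Fin d) (hij : i ≠ j) :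
    (stdGaussianPi d).map (fun x => (x i, x j)) = (gaussianReal 0 1).prod (gaussianReal 0 1) := by
  refine (Measure.prod_eq fun s t hs ht => ?_).symm
  rw [Measure.map_apply ((measurable_pi_apply i).prodMk (measurable_pi_apply j)) (hs.prod ht)]
  classical
  set u := Function.update (Function.update (fun _ : Fin d => (Set.univ : Set ℝ)) i s) j t with hu
  have hpre : (fun x : Fin d → ℝ => (x i, x j)) ⁻¹' (s ×ˢ t) = Set.univ.pi u := by
    ext x
    simp only [Set.mem_preimage, Set.mem_prod, Set.mem_pi, Set.mem_univ, true_implies]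
    constructor
    · rintro ⟨h1, h2⟩ k
      rcases eq_or_ne k j with rfl | hkj
      · rwa [hu, Function.update_self]
      · rw [hu, Function.update_of_ne hkj]
        rcases eq_or_ne k i with rfl | hki
        · rwa [Function.update_self]
        · rw [Function.update_of_ne hki]; trivial
    · intro hx
      constructor
      · have := hx i
        rwa [hu, Function.update_of_ne hij, Function.update_self] at this
      · have := hx j
        rwa [hu, Function.update_self] at this
  rw [hpre]
  show (Measure.pi fun _ => gaussianReal 0 1) _ = _
  rw [Measure.pi_pi]
  have hsub : ∏ k, (gaussianReal 0 1) (u k) = ∏ k ∈ ({i, j} : Finset (Fin d)), (gaussianReal 0 1) (u k) := by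
    refine (Finset.prod_subset (Finset.subset_univ _) fun k _ hk => ?_).symm
    simp only [Finset.mem_insert, Finset.mem_singleton, not_or] at hk
    rw [hu, Function.update_of_ne hk.2, Function.update_of_ne hk.1]
    exact measure_univ
  rw [hsub, Finset.prod_pair hij, hu, Function.update_of_ne hij, Function.update_self,
    Function.update_self]

lemma map_form_unit (a : Fin d → ℝ) (ha : ∑ i, a i ^ 2 = 1) :
    (stdGaussianPi d).map (fun x => ∑ i, a i * x i) = gaussianReal 0 1 := by
  cases d with
  | zero => simp at ha
  | succ n =>
    set A : EuclideanSpace ℝ (Fin (n+1)) := (WithLp.equiv 2 (Fin (n+1) → ℝ)).symm a with hA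
    have hAi : ∀ i, A i = a i := fun i => rfl
    have hnormA : ‖A‖ = 1 := by
      have h1 : ‖A‖^2 = 1 := by
        rw [← euclid_sum_sq]
        simpa only [hAi] using ha
      nlinarith [norm_nonneg A]
    set v : Fin (n+1) → EuclideanSpace ℝ (Fin (n+1)) := fun k => if k = 0 then A else 0 with hv
    have hvon : Orthonormal ℝ (Set.restrict {0} v) := by
      constructor
      · rintro ⟨i, hi⟩
        simp only [Set.mem_singleton_iff] at hi
        subst hi
        show ‖v 0‖ = 1
        simpa [hv] using hnormA
      · rintro ⟨i, hi⟩ ⟨j, hj⟩ hij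
        simp only [Set.mem_singleton_iff] at hi hj
        exact absurd (Subtype.ext (hi.trans hj.symm)) hij
    obtain ⟨bb, hbb⟩ := hvon.exists_orthonormalBasis_extension_of_card_eq (by simp)
    have hb0 : bb 0 = A := by simpa [hv] using hbb 0 rfl
    have hfun : (fun x : Fin (n+1) → ℝ => ∑ i, a i * x i)
        = (fun z : Fin (n+1) → ℝ => z 0) ∘ (basisMap bb) := by
      funext x
      simp only [Function.comp_apply]
      rw [basisMap_apply, hb0]
      exact (Finset.sum_congr rfl fun j _ => by rw [hAi]).symm
    rw [hfun, ← Measure.map_map (measurable_pi_apply 0) (basisMap bb).measurable,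
      stdGaussianPi_map_basisMap, map_eval_pi]

lemma map_form_pair (a b : Fin d → ℝ) (ha : ∑ i, a i ^ 2 = 1) (hb : ∑ i, b i ^ 2 = 1)
    (hρ : |∑ i, a i * b i| < 1) :
    (stdGaussianPi d).map (fun x => (∑ i, a i * x i, ∑ i, b i * x i))
      = ((gaussianReal 0 1).prod (gaussianReal 0 1)).map
          (fun p => (p.1, (∑ i, a i * b i) * p.1
            + Real.sqrt (1 - (∑ i, a i * b i)^2) * p.2)) := by
  have hρ2 : (∑ i, a i * b i)^2 < 1 := by
    nlinarith [sq_abs (∑ i, a i * b i), abs_nonneg (∑ i, a i * b i)]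
  set ρ := ∑ i, a i * b i with hρdef
  set s₀ := Real.sqrt (1 - ρ^2) with hs₀def
  have hs₀ : 0 < s₀ := Real.sqrt_pos.mpr (by linarith)
  have hs₀sq : s₀ * s₀ = 1 - ρ^2 := Real.mul_self_sqrt (by linarith)
  match d, a, b, ha, hb, hρdef, hρ2 with
  | 0, a, b, ha, hb, hρdef, hρ2 => simp at ha
  | 1, a, b, ha, hb, hρdef, hρ2 =>
    exfalso
    rw [Fin.sum_univ_one] at ha hb
    rw [show ρ = a 0 * b 0 from by rw [hρdef, Fin.sum_univ_one]] at hρ2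
    nlinarith
  | (n+2), a, b, ha, hb, hρdef, hρ2 =>
    have h01 : (0 : Fin (n+2)) ≠ 1 := by
      intro h
      simpa using congrArg Fin.val h
    set epi : Fin (n+2) → ℝ := fun i => s₀⁻¹ * (b i - ρ * a i) with hepi
    set A : EuclideanSpace ℝ (Fin (n+2)) := (WithLp.equiv 2 (Fin (n+2) → ℝ)).symm a with hA
    set Ee : EuclideanSpace ℝ (Fin (n+2)) := (WithLp.equiv 2 (Fin (n+2) → ℝ)).symm epi with hEe
    have hinner : ∀ f g : Fin (n+2) → ℝ,
        (inner ℝ ((WithLp.equiv 2 (Fin (n+2) → ℝ)).symm f)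
          ((WithLp.equiv 2 (Fin (n+2) → ℝ)).symm g) : ℝ) = ∑ i, f i * g i := by
      intro f g
      rw [PiLp.inner_apply]
      exact Finset.sum_congr rfl fun i _ => by
        simp [RCLike.inner_apply, starRingEnd_apply]; ring
    have hip_aa : (inner ℝ A A : ℝ) = 1 := by
      rw [hA, hinner]
      rw [← ha]
      exact Finset.sum_congr rfl fun i _ => (sq (a i)).symm
    have hip_ae : (inner ℝ A Ee : ℝ) = 0 := by
      rw [hA, hEe, hinner]
      have : ∀ i, a i * epi i = s₀⁻¹ * (a i * b i) - (s₀⁻¹ * ρ) * (a i)^2 := by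
        intro i; rw [hepi]; ring
      rw [Finset.sum_congr rfl fun i _ => this i, Finset.sum_sub_distrib, ← Finset.mul_sum,
        ← Finset.mul_sum, ha, ← hρdef]
      ring
    have hip_ee : (inner ℝ Ee Ee : ℝ) = 1 := by
      rw [hEe, hinner]
      have : ∀ i, epi i * epi i = (s₀⁻¹*s₀⁻¹) * (b i)^2
          - (2*ρ*(s₀⁻¹*s₀⁻¹)) * (a i * b i) + (ρ^2*(s₀⁻¹*s₀⁻¹)) * (a i)^2 := by
        intro i; rw [hepi]; ring
      rw [Finset.sum_congr rfl fun i _ => this i]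
      rw [Finset.sum_add_distrib, Finset.sum_sub_distrib, ← Finset.mul_sum, ← Finset.mul_sum,
        ← Finset.mul_sum, ha, hb, ← hρdef]
      have key : s₀⁻¹ * s₀⁻¹ * (1 - ρ^2) = 1 := by
        rw [← hs₀sq]
        field_simp
      linear_combination key
    have hnormA : ‖A‖ = 1 := by
      have := hip_aa
      rw [real_inner_self_eq_norm_sq] at this
      nlinarith [norm_nonneg A]
    have hnormE : ‖Ee‖ = 1 := by
      have := hip_ee
      rw [real_inner_self_eq_norm_sq] at this
      nlinarith [norm_nonneg Ee]
    set v : Fin (n+2) → EuclideanSpace ℝ (Fin (n+2)) :=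
      fun k => if k = 0 then A else if k = 1 then Ee else 0 with hv
    have hv0 : v 0 = A := by simp [hv]
    have hv1 : v 1 = Ee := by simp [hv, h01.symm]
    have hvon : Orthonormal ℝ (Set.restrict {0, 1} v) := by
      constructor
      · rintro ⟨i, hi⟩
        simp only [Set.mem_insert_iff, Set.mem_singleton_iff] at hi
        rcases hi with rfl | rfl
        · show ‖v 0‖ = 1
          simpa [hv0] using hnormA
        · show ‖v 1‖ = 1
          simpa [hv1] using hnormE
      · rintro ⟨i, hi⟩ ⟨j, hj⟩ hij
        simp only [Set.mem_insert_iff, Set.mem_singleton_iff] at hi hj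
        have hne : i ≠ j := fun h => hij (Subtype.ext h)
        rcases hi with rfl | rfl <;> rcases hj with rfl | rfl
        · exact absurd rfl hne
        · show (inner ℝ (v 0) (v 1) : ℝ) = 0
          simpa [Set.restrict_apply, hv0, hv1] using hip_ae
        · show (inner ℝ (v 1) (v 0) : ℝ) = 0
          rw [hv0, hv1, real_inner_comm]
          exact hip_ae
        · exact absurd rfl hne
    obtain ⟨bb, hbb⟩ := hvon.exists_orthonormalBasis_extension_of_card_eq (by simp)
    have hb0 : bb 0 = A := by
      have := hbb 0 (by simp)
      rwa [hv0] at this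
    have hb1 : bb 1 = Ee := by
      have := hbb 1 (by simp)
      rwa [hv1] at this
    have hbcomb : ∀ i, b i = ρ * a i + s₀ * epi i := by
      intro i
      rw [hepi]
      field_simp
      ring
    have hfun : (fun x : Fin (n+2) → ℝ => (∑ i, a i * x i, ∑ i, b i * x i))
        = (fun z : Fin (n+2) → ℝ => (z 0, ρ * z 0 + s₀ * z 1)) ∘ (basisMap bb) := by
      funext x
      have hc0 : basisMap bb x 0 = ∑ j, a j * x j := by
        rw [basisMap_apply, hb0]
        rfl
      have hc1 : basisMap bb x 1 = ∑ j, epi j * x j := by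
        rw [basisMap_apply, hb1]
        rfl
      have hsum : ∑ i, b i * x i = ρ * (∑ j, a j * x j) + s₀ * (∑ j, epi j * x j) := by
        rw [Finset.mul_sum, Finset.mul_sum, ← Finset.sum_add_distrib]
        exact Finset.sum_congr rfl fun i _ => by rw [hbcomb i]; ring
      simp only [Function.comp_apply, hc0, hc1]
      rw [hsum]
    have hpairmeas : Measurable fun z : Fin (n+2) → ℝ => (z 0, z 1) :=
      (measurable_pi_apply 0).prodMk (measurable_pi_apply 1)
    have hg2meas : Measurable fun p : ℝ × ℝ => (p.1, ρ * p.1 + s₀ * p.2) :=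
      measurable_fst.prodMk ((measurable_fst.const_mul ρ).add (measurable_snd.const_mul s₀))
    have hcomp : (fun z : Fin (n+2) → ℝ => (z 0, ρ * z 0 + s₀ * z 1))
        = (fun p : ℝ × ℝ => (p.1, ρ * p.1 + s₀ * p.2)) ∘ (fun z : Fin (n+2) → ℝ => (z 0, z 1)) :=
      rfl
    rw [hfun, ← Measure.map_map (hcomp ▸ (hg2meas.comp hpairmeas)) (basisMap bb).measurable,
      stdGaussianPi_map_basisMap, hcomp, ← Measure.map_map hg2meas hpairmeas,
      map_pair_pi 0 1 h01]

end Stage3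

section Stage4
open Filter

lemma gaussianPDFReal_std (t : ℝ) :
    gaussianPDFReal 0 1 t = (Real.sqrt (2*π))⁻¹ * Real.exp (-t^2/2) := by
  simp [gaussianPDFReal, sub_zero]

lemma tendsto_mul_exp_aux : Tendsto (fun r : ℝ => r * Real.exp (-r^2/2)) atTop (nhds 0) := by
  have h := rpow_mul_exp_neg_mul_sq_isLittleO_exp_neg (b := 1/2) one_half_pos 1
  have h2 : (fun x : ℝ => x ^ (1:ℝ) * Real.exp (-(1/2) * x^2))
      = fun r : ℝ => r * Real.exp (-r^2/2) := by
    funext x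
    rw [Real.rpow_one]
    ring_nf
  rw [h2] at h
  refine h.trans_tendsto ?_
  have h1 : Tendsto (fun x : ℝ => -(1/2) * x) atTop atBot :=
    tendsto_id.const_mul_atTop_of_neg (show (-(1/2):ℝ) < 0 by norm_num)
  exact Real.tendsto_exp_atBot.comp h1

lemma tendsto_exp_neg_sq_aux : Tendsto (fun r : ℝ => Real.exp (-r^2/2)) atTop (nhds 0) := by
  have h1 : Tendsto (fun r : ℝ => -r^2/2) atTop atBot := by
    have h2 : Tendsto (fun r : ℝ => r^2) atTop atTop := tendsto_pow_atTop two_ne_zero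
    have h3 := h2.const_mul_atTop_of_neg (show (-(1/2):ℝ) < 0 by norm_num)
    have : (fun r : ℝ => -(1/2) * r^2) = fun r : ℝ => -r^2/2 := by funext r; ring
    rwa [this] at h3
  exact Real.tendsto_exp_atBot.comp h1

lemma integrable_mul_exp_aux : Integrable (fun x : ℝ => x * Real.exp (-x^2/2)) := by
  have h := integrable_mul_exp_neg_mul_sq (b := 1/2) one_half_pos
  have h2 : (fun x : ℝ => x * Real.exp (-(1/2) * x^2)) = fun x : ℝ => x * Real.exp (-x^2/2) := by
    funext x; ring_nf
  rwa [h2] at h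

lemma integrable_sq_mul_exp_aux : Integrable (fun x : ℝ => x^2 * Real.exp (-x^2/2)) := by
  have h := integrable_rpow_mul_exp_neg_mul_sq (b := 1/2) one_half_pos
    (s := ((2:ℕ):ℝ)) (by norm_num)
  have h2 : (fun x : ℝ => x ^ ((2:ℕ):ℝ) * Real.exp (-(1/2) * x^2))
      = fun x : ℝ => x^2 * Real.exp (-x^2/2) := by
    funext x
    rw [Real.rpow_natCast]
    ring_nf
  rwa [h2] at h

lemma integrable_exp_aux : Integrable (fun x : ℝ => Real.exp (-x^2/2)) := by
  have h := integrable_exp_neg_mul_sq (b := 1/2) one_half_pos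
  have h2 : (fun x : ℝ => Real.exp (-(1/2) * x^2)) = fun x : ℝ => Real.exp (-x^2/2) := by
    funext x; ring_nf
  rwa [h2] at h

lemma radial_integral_one : ∫ r in Set.Ioi (0:ℝ), r * Real.exp (-r^2/2) = 1 := by
  have hderiv : ∀ x ∈ Set.Ioi (0:ℝ),
      HasDerivAt (fun r : ℝ => -Real.exp (-r^2/2)) (x * Real.exp (-x^2/2)) x := by
    intro x _
    have h1 : HasDerivAt (fun r : ℝ => -r^2/2) (-x) x := by
      have := ((hasDerivAt_pow 2 x).neg.div_const 2)
      refine this.congr_deriv ?_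
      simp
      ring
    have h2 := (h1.exp).neg
    refine h2.congr_deriv ?_
    ring
  have hcont : ContinuousWithinAt (fun r : ℝ => -Real.exp (-r^2/2)) (Set.Ici 0) 0 :=
    ((Real.continuous_exp.comp (by continuity)).neg).continuousWithinAt
  have htend : Tendsto (fun r : ℝ => -Real.exp (-r^2/2)) atTop (nhds 0) := by
    have := tendsto_exp_neg_sq_aux.neg
    rwa [neg_zero] at this
  have := integral_Ioi_of_hasDerivAt_of_tendsto hcont hderiv
    integrable_mul_exp_aux.integrableOn htend
  rw [this]
  norm_num

lemma radial_integral_sq : ∫ r in Set.Ioi (0:ℝ), r^2 * Real.exp (-r^2/2)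
    = Real.sqrt (2*π) / 2 := by
  have hderiv : ∀ x ∈ Set.Ioi (0:ℝ),
      HasDerivAt (fun r : ℝ => -r * Real.exp (-r^2/2))
        (x^2 * Real.exp (-x^2/2) - Real.exp (-x^2/2)) x := by
    intro x _
    have h1 : HasDerivAt (fun r : ℝ => -r^2/2) (-x) x := by
      have := ((hasDerivAt_pow 2 x).neg.div_const 2)
      refine this.congr_deriv ?_
      simp
      ring
    have h2 : HasDerivAt (fun r : ℝ => Real.exp (-r^2/2)) (Real.exp (-x^2/2) * (-x)) x := h1.exp
    have h3 := (hasDerivAt_id x).neg.mul h2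
    refine h3.congr_deriv ?_
    simp only [Pi.neg_apply, id_eq]
    ring
  have hcont : ContinuousWithinAt (fun r : ℝ => -r * Real.exp (-r^2/2)) (Set.Ici 0) 0 :=
    ((continuous_id.neg).mul (Real.continuous_exp.comp (by continuity))).continuousWithinAt
  have htend : Tendsto (fun r : ℝ => -r * Real.exp (-r^2/2)) atTop (nhds 0) := by
    have := tendsto_mul_exp_aux.neg
    rw [neg_zero] at this
    have heq : (fun r : ℝ => -(r * Real.exp (-r^2/2))) = fun r : ℝ => -r * Real.exp (-r^2/2) := by
      funext r; ring
    rwa [heq] at this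
  have hint : IntegrableOn (fun x : ℝ => x^2 * Real.exp (-x^2/2) - Real.exp (-x^2/2))
      (Set.Ioi 0) := (integrable_sq_mul_exp_aux.sub integrable_exp_aux).integrableOn
  have hkey := integral_Ioi_of_hasDerivAt_of_tendsto hcont hderiv hint htend
  rw [MeasureTheory.integral_sub integrable_sq_mul_exp_aux.integrableOn
    integrable_exp_aux.integrableOn] at hkey
  have hg : ∫ x in Set.Ioi (0:ℝ), Real.exp (-x^2/2) = Real.sqrt (2*π) / 2 := by
    have := integral_gaussian_Ioi (1/2)
    have h2 : (fun x : ℝ => Real.exp (-(1/2) * x^2)) = fun x : ℝ => Real.exp (-x^2/2) := by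
      funext x; ring_nf
    rw [h2] at this
    rw [this]
    congr 2
    ring
  have : ∫ x in Set.Ioi (0:ℝ), x^2 * Real.exp (-x^2/2)
      = ∫ x in Set.Ioi (0:ℝ), Real.exp (-x^2/2) := by
    have h0 : (0:ℝ) - (-(0:ℝ) * Real.exp (-(0:ℝ)^2/2)) = 0 := by simp
    linarith [hkey, h0]
  rw [this, hg]

lemma gaussianReal_eq_wd : gaussianReal 0 1
    = (volume : Measure ℝ).withDensity fun t => ((gaussianPDFReal 0 1 t).toNNReal : ℝ≥0∞) := by
  rw [gaussianReal_of_var_ne_zero 0 one_ne_zero]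
  rfl

lemma integrable_sq_std : Integrable (fun t : ℝ => t^2) (gaussianReal 0 1) := by
  rw [gaussianReal_eq_wd, integrable_withDensity_iff
    ((measurable_gaussianPDFReal 0 1).real_toNNReal.coe_nnreal_ennreal)
    (Filter.Eventually.of_forall fun x => ENNReal.coe_lt_top)]
  have heq : (fun t : ℝ => t^2 * ((((gaussianPDFReal 0 1 t).toNNReal : ℝ≥0∞)).toReal))
      = fun t : ℝ => (Real.sqrt (2*π))⁻¹ * (t^2 * Real.exp (-t^2/2)) := by
    funext t
    rw [ENNReal.coe_toReal, Real.coe_toNNReal _ (gaussianPDFReal_nonneg 0 1 t),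
      gaussianPDFReal_std]
    ring
  rw [heq]
  exact integrable_sq_mul_exp_aux.const_mul _

lemma second_moment_std : ∫ t, t^2 ∂(gaussianReal 0 1) = 1 := by
  rw [gaussianReal_eq_wd,
    integral_withDensity_eq_integral_smul (measurable_gaussianPDFReal 0 1).real_toNNReal
      (fun t => t^2)]
  have heq : (fun t : ℝ => (gaussianPDFReal 0 1 t).toNNReal • t^2)
      = fun t : ℝ => (Real.sqrt (2*π))⁻¹ * (t^2 * Real.exp (-t^2/2)) := by
    funext t
    rw [NNReal.smul_def, Real.coe_toNNReal _ (gaussianPDFReal_nonneg 0 1 t), gaussianPDFReal_std,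
      smul_eq_mul]
    ring
  rw [heq, MeasureTheory.integral_const_mul]
  have heven : (fun t : ℝ => t^2 * Real.exp (-t^2/2))
      = fun t : ℝ => |t|^2 * Real.exp (-|t|^2/2) := by
    funext t
    rw [sq_abs]
  rw [heven]
  rw [integral_comp_abs (f := fun t : ℝ => t^2 * Real.exp (-t^2/2)), radial_integral_sq]
  have hne : Real.sqrt (2*π) ≠ 0 := by
    positivity
  field_simp

lemma integrable_sq_gaussian (v : ℝ≥0) : Integrable (fun t : ℝ => t^2) (gaussianReal 0 v) := by
  by_cases hv : v = 0
  · subst hv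
    rw [gaussianReal_zero_var]
    refine ⟨by fun_prop, ?_⟩
    have : (∫⁻ t, (‖t^2‖₊ : ℝ≥0∞) ∂(Measure.dirac (0:ℝ))) < ⊤ := by
      rw [lintegral_dirac' _ (by fun_prop : Measurable fun t : ℝ => ((‖t^2‖₊ : ℝ≥0∞)))]
      exact ENNReal.coe_lt_top
    exact this
  · have hmap := gaussianReal_map_const_mul (μ := 0) (v := 1) (Real.sqrt v)
    have hvv : (NNReal.mk (Real.sqrt v ^ 2) (sq_nonneg _)) * 1 = v := by
      rw [mul_one]
      ext
      exact Real.sq_sqrt (NNReal.coe_nonneg v)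
    rw [mul_zero, hvv] at hmap
    rw [← hmap]
    rw [integrable_map_measure (by fun_prop) (by fun_prop)]
    have : ((fun t : ℝ => t^2) ∘ fun x : ℝ => Real.sqrt v * x)
        = fun t : ℝ => (v:ℝ) * t^2 := by
      funext t
      simp only [Function.comp_apply]
      rw [mul_pow, Real.sq_sqrt (NNReal.coe_nonneg v)]
    rw [this]
    exact integrable_sq_std.const_mul _

lemma second_moment_gaussian (v : ℝ≥0) : ∫ t, t^2 ∂(gaussianReal 0 v) = v := by
  by_cases hv : v = 0
  · subst hv
    rw [gaussianReal_zero_var]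
    simp
  · have hmap := gaussianReal_map_const_mul (μ := 0) (v := 1) (Real.sqrt v)
    have hvv : (NNReal.mk (Real.sqrt v ^ 2) (sq_nonneg _)) * 1 = v := by
      rw [mul_one]
      ext
      exact Real.sq_sqrt (NNReal.coe_nonneg v)
    rw [mul_zero, hvv] at hmap
    rw [← hmap, integral_map (by fun_prop) (by fun_prop)]
    have : ∀ x : ℝ, (Real.sqrt v * x)^2 = (v:ℝ) * x^2 := by
      intro x
      rw [mul_pow, Real.sq_sqrt (NNReal.coe_nonneg v)]
    simp only [this]
    rw [MeasureTheory.integral_const_mul, second_moment_std, mul_one]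

lemma map_form_gen {d : ℕ} (c : Fin d → ℝ) :
    (stdGaussianPi d).map (fun x => ∑ i, c i * x i)
      = gaussianReal 0 (NNReal.mk (∑ i, c i^2) (by positivity)) := by
  by_cases hc : ∑ i, c i ^ 2 = 0
  · have hzero : ∀ i ∈ Finset.univ, c i ^ 2 = 0 :=
      (Finset.sum_eq_zero_iff_of_nonneg fun i _ => sq_nonneg _).mp hc
    have hfun : (fun x : Fin d → ℝ => ∑ i, c i * x i) = fun _ => (0:ℝ) := by
      funext x
      refine Finset.sum_eq_zero fun i hi => ?_
      have hz : c i = 0 := pow_eq_zero_iff two_ne_zero |>.mp (hzero i hi)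
      rw [hz, zero_mul]
    have hv : (NNReal.mk (∑ i, c i^2) (by positivity)) = 0 := by
      ext; exact hc
    rw [hfun, hv, gaussianReal_zero_var, Measure.map_const, measure_univ, one_smul]
  · set t := Real.sqrt (∑ i, c i^2) with ht
    have htpos : 0 < t := Real.sqrt_pos.mpr (lt_of_le_of_ne (by positivity) (Ne.symm hc))
    have ht2 : t^2 = ∑ i, c i^2 := Real.sq_sqrt (by positivity)
    set a : Fin d → ℝ := fun i => t⁻¹ * c i with ha
    have hasum : ∑ i, a i ^ 2 = 1 := by
      have : ∀ i, a i ^ 2 = t⁻¹^2 * c i ^2 := fun i => by rw [ha]; ring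
      rw [Finset.sum_congr rfl fun i _ => this i, ← Finset.mul_sum, ← ht2]
      field_simp
    have hfun : (fun x : Fin d → ℝ => ∑ i, c i * x i)
        = (fun u : ℝ => t * u) ∘ (fun x => ∑ i, a i * x i) := by
      funext x
      simp only [Function.comp_apply, Finset.mul_sum]
      refine Finset.sum_congr rfl fun i _ => ?_
      rw [ha]
      field_simp
    rw [hfun, ← Measure.map_map (show Measurable fun u : ℝ => t * u from by fun_prop)
      (measurable_form a), map_form_unit a hasum]
    have := gaussianReal_map_const_mul (μ := 0) (v := 1) t
    rw [mul_zero] at this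
    rw [this]
    congr 1
    rw [mul_one]
    ext
    exact ht2

lemma moment_form_sq {d : ℕ} (c : Fin d → ℝ) :
    Integrable (fun x : Fin d → ℝ => (∑ i, c i * x i)^2) (stdGaussianPi d) ∧
    ∫ x, (∑ i, c i * x i)^2 ∂(stdGaussianPi d) = ∑ i, c i^2 := by
  have hmap := map_form_gen c
  have hint : Integrable (fun t : ℝ => t^2) ((stdGaussianPi d).map (fun x => ∑ i, c i * x i)) := by
    rw [hmap]; exact integrable_sq_gaussian _
  constructor
  · have := (integrable_map_measure (by fun_prop) (measurable_form c).aemeasurable).mp hint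
    exact this
  · have := integral_map (μ := stdGaussianPi d) (measurable_form c).aemeasurable
      (f := fun t : ℝ => t^2) (by fun_prop)
    rw [hmap] at this
    rw [show (fun x : Fin d → ℝ => (∑ i, c i * x i)^2)
      = fun x => ((fun t : ℝ => t^2) (∑ i, c i * x i)) from rfl, ← this,
      second_moment_gaussian]
    rfl

lemma gaussian_Ico_bound {a b : ℝ} (hab : a ≤ b) :
    ((gaussianReal 0 1) (Set.Ico a b)).toReal ≤ b - a := by
  rw [gaussianReal_apply_eq_integral 0 one_ne_zero,
    ENNReal.toReal_ofReal (setIntegral_nonneg measurableSet_Ico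
      fun t _ => gaussianPDFReal_nonneg 0 1 t)]
  have hbound : ∀ t ∈ Set.Ico a b, gaussianPDFReal 0 1 t ≤ 1 := by
    intro t _
    rw [gaussianPDFReal_std]
    have h1 : Real.exp (-t^2/2) ≤ 1 := by
      rw [Real.exp_le_one_iff]
      nlinarith [sq_nonneg t]
    have h2 : (Real.sqrt (2*π))⁻¹ ≤ 1 := by
      have hge : (1:ℝ) ≤ Real.sqrt (2*π) := by
        rw [show (1:ℝ) = Real.sqrt 1 from (Real.sqrt_one).symm]
        exact Real.sqrt_le_sqrt (by nlinarith [Real.pi_gt_three])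
      exact inv_le_one_of_one_le₀ hge
    calc (Real.sqrt (2*π))⁻¹ * Real.exp (-t^2/2) ≤ 1 * 1 := by
          apply mul_le_mul h2 h1 (Real.exp_nonneg _) zero_le_one
      _ = 1 := mul_one 1
  calc ∫ t in Set.Ico a b, gaussianPDFReal 0 1 t
      ≤ ∫ _t in Set.Ico a b, (1:ℝ) := by
        apply setIntegral_mono_on (integrable_gaussianPDFReal 0 1).integrableOn
          (integrableOn_const (by rw [Real.volume_Ico]; exact ENNReal.ofReal_ne_top))
          measurableSet_Ico hbound
    _ = b - a := by
        rw [setIntegral_const, Real.volume_real_Ico_of_le (by linarith),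
          smul_eq_mul, mul_one]

section Stage5

lemma pdf_prod_point (r x y : ℝ) (hxy : x^2 + y^2 = r^2) :
    gaussianPDFReal 0 1 x * gaussianPDFReal 0 1 y = (2*π)⁻¹ * Real.exp (-r^2/2) := by
  have h2π : (Real.sqrt (2*π))⁻¹ * (Real.sqrt (2*π))⁻¹ = (2*π)⁻¹ := by
    rw [← mul_inv, Real.mul_self_sqrt (by positivity)]
  rw [gaussianPDFReal_std, gaussianPDFReal_std]
  calc (Real.sqrt (2*π))⁻¹ * Real.exp (-x^2/2) * ((Real.sqrt (2*π))⁻¹ * Real.exp (-y^2/2))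
      = ((Real.sqrt (2*π))⁻¹ * (Real.sqrt (2*π))⁻¹) * (Real.exp (-x^2/2) * Real.exp (-y^2/2)) := by
        ring
    _ = (2*π)⁻¹ * Real.exp (-r^2/2) := by
        rw [h2π, ← Real.exp_add]
        congr 1
        rw [← hxy]
        ring

lemma gaussian2_eq : (gaussianReal 0 1).prod (gaussianReal 0 1)
    = (volume : Measure (ℝ×ℝ)).withDensity
        (fun p => ENNReal.ofReal (gaussianPDFReal 0 1 p.1 * gaussianPDFReal 0 1 p.2)) := by
  refine Measure.prod_eq fun s t hs ht => ?_
  rw [withDensity_apply _ (hs.prod ht)]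
  have hcong : ∀ p : ℝ × ℝ, ENNReal.ofReal (gaussianPDFReal 0 1 p.1 * gaussianPDFReal 0 1 p.2)
      = ENNReal.ofReal (gaussianPDFReal 0 1 p.1) * ENNReal.ofReal (gaussianPDFReal 0 1 p.2) :=
    fun p => ENNReal.ofReal_mul (gaussianPDFReal_nonneg 0 1 p.1)
  rw [lintegral_congr hcong, Measure.volume_eq_prod, ← Measure.prod_restrict,
    lintegral_prod_mul ((measurable_gaussianPDFReal 0 1).ennreal_ofReal).aemeasurable
      ((measurable_gaussianPDFReal 0 1).ennreal_ofReal).aemeasurable,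
    gaussianReal_apply 0 one_ne_zero s, gaussianReal_apply 0 one_ne_zero t]
  rfl

lemma intervalIntegrable_indicator_sgn {θ : ℝ} (a b : ℝ) :
    IntervalIntegrable
      (fun φ : ℝ => if sgn (Real.cos φ) ≠ sgn (Real.cos (φ - θ)) then (1:ℝ) else 0) volume a b := by
  have hmeas : Measurable (fun φ : ℝ => if sgn (Real.cos φ) ≠ sgn (Real.cos (φ - θ)) then (1:ℝ) else 0) := by
    refine Measurable.ite ?_ measurable_const measurable_const
    exact (measurableSet_eq_fun (measurable_sgn.comp Real.measurable_cos)
      (measurable_sgn.comp (Real.measurable_cos.comp (measurable_id.sub_const θ)))).compl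
  constructor <;>
  · refine Integrable.mono' (integrable_const 1) hmeas.aestronglyMeasurable.restrict ?_
    refine Filter.Eventually.of_forall fun x => ?_
    split <;> simp

lemma angular_integral {θ : ℝ} (hθ0 : 0 < θ) (hθπ : θ < π) :
    ∫ φ in Set.Ioo (-π) π,
      (if sgn (Real.cos φ) ≠ sgn (Real.cos (φ - θ)) then (1:ℝ) else 0) = 2*θ := by
  set h : ℝ → ℝ := fun φ => if sgn (Real.cos φ) ≠ sgn (Real.cos (φ - θ)) then (1:ℝ) else 0 with hh
  have hπ := Real.pi_pos
  have hbdd : ∀ a b : ℝ, IntervalIntegrable h volume a b := fun a b =>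
    intervalIntegrable_indicator_sgn a b
  have hstep1 : ∫ φ in Set.Ioo (-π) π, h φ = ∫ φ in (-π)..π, h φ := by
    rw [intervalIntegral.integral_of_le (by linarith), integral_Ioc_eq_integral_Ioo]
  have hper : Function.Periodic h (2*π) := by
    intro φ
    rw [hh]
    dsimp only
    rw [show φ + 2*π - θ = (φ - θ) + 2*π by ring, Real.cos_add_two_pi, Real.cos_add_two_pi]
  have hshift : ∫ φ in (-π)..π, h φ = ∫ φ in (θ/2-π)..(θ/2+π), h φ := by
    have h1 := hper.intervalIntegral_add_eq (-π) (θ/2-π)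
    rw [show -π + 2*π = π by ring, show θ/2-π + 2*π = θ/2+π by ring] at h1
    exact h1
  -- sign helper lemmas
  have hcos_pos : ∀ x : ℝ, -(π/2) < x → x < π/2 → 0 < Real.cos x := fun x h1 h2 =>
    Real.cos_pos_of_mem_Ioo ⟨h1, h2⟩
  have hcos_neg : ∀ x : ℝ, π/2 < x → x < π + π/2 → Real.cos x < 0 := fun x h1 h2 =>
    Real.cos_neg_of_pi_div_two_lt_of_lt h1 h2
  have hcos_neg' : ∀ x : ℝ, -(π + π/2) < x → x < -(π/2) → Real.cos x < 0 := by
    intro x h1 h2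
    rw [← Real.cos_neg]
    exact hcos_neg (-x) (by linarith) (by linarith)
  -- value on each of the five subintervals
  have hval1 : ∀ φ ∈ Set.Ioo (θ/2-π) (-(π/2)), h φ = 0 := by
    rintro φ ⟨h1, h2⟩
    have hc1 : Real.cos φ < 0 := hcos_neg' φ (by linarith) h2
    have hc2 : Real.cos (φ - θ) < 0 := hcos_neg' (φ - θ) (by linarith) (by linarith)
    rw [hh]
    dsimp only
    rw [sgn_of_neg hc1, sgn_of_neg hc2]
    simp
  have hval2 : ∀ φ ∈ Set.Ioo (-(π/2)) (θ-π/2), h φ = 1 := by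
    rintro φ ⟨h1, h2⟩
    have hc1 : 0 < Real.cos φ := hcos_pos φ h1 (by linarith)
    have hc2 : Real.cos (φ - θ) < 0 := hcos_neg' (φ - θ) (by linarith) (by linarith)
    rw [hh]
    dsimp only
    rw [sgn_of_nonneg hc1.le, sgn_of_neg hc2]
    norm_num
  have hval3 : ∀ φ ∈ Set.Ioo (θ-π/2) (π/2), h φ = 0 := by
    rintro φ ⟨h1, h2⟩
    have hc1 : 0 < Real.cos φ := hcos_pos φ (by linarith) h2
    have hc2 : 0 < Real.cos (φ - θ) := hcos_pos (φ - θ) (by linarith) (by linarith)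
    rw [hh]
    dsimp only
    rw [sgn_of_nonneg hc1.le, sgn_of_nonneg hc2.le]
    simp
  have hval4 : ∀ φ ∈ Set.Ioo (π/2) (θ+π/2), h φ = 1 := by
    rintro φ ⟨h1, h2⟩
    have hc1 : Real.cos φ < 0 := hcos_neg φ h1 (by linarith)
    have hc2 : 0 < Real.cos (φ - θ) := hcos_pos (φ - θ) (by linarith) (by linarith)
    rw [hh]
    dsimp only
    rw [sgn_of_neg hc1, sgn_of_nonneg hc2.le]
    norm_num
  have hval5 : ∀ φ ∈ Set.Ioo (θ+π/2) (θ/2+π), h φ = 0 := by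
    rintro φ ⟨h1, h2⟩
    have hc1 : Real.cos φ < 0 := hcos_neg φ (by linarith) (by linarith)
    have hc2 : Real.cos (φ - θ) < 0 := hcos_neg (φ - θ) (by linarith) (by linarith)
    rw [hh]
    dsimp only
    rw [sgn_of_neg hc1, sgn_of_neg hc2]
    simp
  have heval : ∀ (a b v : ℝ), a ≤ b → (∀ φ ∈ Set.Ioo a b, h φ = v) →
      ∫ φ in a..b, h φ = v * (b - a) := by
    intro a b v hab hval
    rw [intervalIntegral.integral_of_le hab, integral_Ioc_eq_integral_Ioo,
      setIntegral_congr_fun measurableSet_Ioo hval, setIntegral_const,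
      Real.volume_real_Ioo_of_le (by linarith), smul_eq_mul, mul_comm]
  have e1 : ∫ φ in (θ/2-π)..(-(π/2)), h φ = 0 := by
    rw [heval _ _ 0 (by linarith) hval1]; ring
  have e2 : ∫ φ in (-(π/2))..(θ-π/2), h φ = θ := by
    rw [heval _ _ 1 (by linarith) hval2]; ring
  have e3 : ∫ φ in (θ-π/2)..(π/2), h φ = 0 := by
    rw [heval _ _ 0 (by linarith) hval3]; ring
  have e4 : ∫ φ in (π/2)..(θ+π/2), h φ = θ := by
    rw [heval _ _ 1 (by linarith) hval4]; ring
  have e5 : ∫ φ in (θ+π/2)..(θ/2+π), h φ = 0 := by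
    rw [heval _ _ 0 (by linarith) hval5]; ring
  have s4 : ∫ φ in (π/2)..(θ/2+π), h φ = θ := by
    rw [← intervalIntegral.integral_add_adjacent_intervals (hbdd (π/2) (θ+π/2))
      (hbdd (θ+π/2) (θ/2+π)), e4, e5]
    ring
  have s3 : ∫ φ in (θ-π/2)..(θ/2+π), h φ = θ := by
    rw [← intervalIntegral.integral_add_adjacent_intervals (hbdd (θ-π/2) (π/2))
      (hbdd (π/2) (θ/2+π)), e3, s4]
    ring
  have s2 : ∫ φ in (-(π/2))..(θ/2+π), h φ = 2*θ := by
    rw [← intervalIntegral.integral_add_adjacent_intervals (hbdd (-(π/2)) (θ-π/2))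
      (hbdd (θ-π/2) (θ/2+π)), e2, s3]
    ring
  have s1 : ∫ φ in (θ/2-π)..(θ/2+π), h φ = 2*θ := by
    rw [← intervalIntegral.integral_add_adjacent_intervals (hbdd (θ/2-π) (-(π/2)))
      (hbdd (-(π/2)) (θ/2+π)), e1, s2]
    ring
  rw [hstep1, hshift, s1]

lemma wedge_prob {ρ : ℝ} (hρ : |ρ| < 1) :
    (((gaussianReal 0 1).prod (gaussianReal 0 1))
      {p : ℝ × ℝ | sgn p.1 ≠ sgn (ρ * p.1 + Real.sqrt (1 - ρ^2) * p.2)}).toReal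
    = Real.arccos ρ / π := by
  have hπ := Real.pi_pos
  obtain ⟨hρ1, hρ2⟩ := abs_lt.mp hρ
  set θ := Real.arccos ρ with hθ
  have hθ0 : 0 < θ := Real.arccos_pos.mpr hρ2
  have hθπ : θ < π := by
    rw [hθ, Real.arccos]
    have := Real.neg_pi_div_two_lt_arcsin (x := ρ)
    linarith [this.mpr hρ1]
  have hcos : Real.cos θ = ρ := Real.cos_arccos hρ1.le hρ2.le
  have hsin : Real.sin θ = Real.sqrt (1 - ρ^2) := Real.sin_arccos ρ
  set S := {p : ℝ × ℝ | sgn p.1 ≠ sgn (ρ * p.1 + Real.sqrt (1 - ρ^2) * p.2)} with hS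
  have hSmeas : MeasurableSet S :=
    (measurableSet_eq_fun (measurable_sgn.comp measurable_fst)
      (measurable_sgn.comp ((measurable_fst.const_mul ρ).add
        (measurable_snd.const_mul _)))).compl
  set f2 : ℝ × ℝ → ℝ := fun p => gaussianPDFReal 0 1 p.1 * gaussianPDFReal 0 1 p.2 with hf2
  have hf2nonneg : ∀ p, 0 ≤ f2 p := fun p =>
    mul_nonneg (gaussianPDFReal_nonneg 0 1 p.1) (gaussianPDFReal_nonneg 0 1 p.2)
  have hf2int : Integrable f2 (volume : Measure (ℝ×ℝ)) := by
    rw [hf2, Measure.volume_eq_prod]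
    exact (integrable_gaussianPDFReal 0 1).mul_prod (integrable_gaussianPDFReal 0 1)
  have hstep1 : (((gaussianReal 0 1).prod (gaussianReal 0 1)) S).toReal = ∫ p in S, f2 p := by
    rw [gaussian2_eq, withDensity_apply _ hSmeas,
      ← ofReal_integral_eq_lintegral_ofReal hf2int.integrableOn
        (Filter.Eventually.of_forall fun p => hf2nonneg p),
      ENNReal.toReal_ofReal (setIntegral_nonneg hSmeas fun p _ => hf2nonneg p)]
  rw [hstep1, ← integral_indicator hSmeas, ← integral_comp_polarCoord_symm (S.indicator f2)]
  have htarget_eq : ∀ p ∈ polarCoord.target,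
      p.1 • (S.indicator f2) (polarCoord.symm p)
        = (p.1 * ((2*π)⁻¹ * Real.exp (-p.1^2/2)))
            * (if sgn (Real.cos p.2) ≠ sgn (Real.cos (p.2 - θ)) then (1:ℝ) else 0) := by
    rintro ⟨r, φ⟩ hp
    have hr : 0 < r := hp.1
    have hsymm : polarCoord.symm (r, φ) = (r * Real.cos φ, r * Real.sin φ) := rfl
    have harg : ρ * (r * Real.cos φ) + Real.sqrt (1 - ρ^2) * (r * Real.sin φ)
        = r * Real.cos (φ - θ) := by
      rw [Real.cos_sub, ← hsin, ← hcos]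
      ring
    have hmem : ((r * Real.cos φ, r * Real.sin φ) ∈ S)
        ↔ (sgn (Real.cos φ) ≠ sgn (Real.cos (φ - θ))) := by
      rw [hS]
      simp only [Set.mem_setOf_eq]
      rw [harg, sgn_mul_pos hr, sgn_mul_pos hr]
    rw [hsymm]
    by_cases hcond : sgn (Real.cos φ) ≠ sgn (Real.cos (φ - θ))
    · rw [Set.indicator_of_mem (hmem.mpr hcond), if_pos hcond, hf2]
      dsimp only
      rw [pdf_prod_point r _ _ (by
        have := Real.sin_sq_add_cos_sq φ
        nlinarith)]
      rw [smul_eq_mul]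
      ring
    · rw [Set.indicator_of_notMem (fun hmem' => hcond (hmem.mp hmem')), if_neg hcond]
      simp
  rw [setIntegral_congr_fun polarCoord.open_target.measurableSet htarget_eq]
  have htgt : polarCoord.target = Set.Ioi (0:ℝ) ×ˢ Set.Ioo (-π) π := rfl
  rw [htgt, Measure.volume_eq_prod, ← Measure.prod_restrict,
    integral_prod_mul (f := fun r : ℝ => r * ((2*π)⁻¹ * Real.exp (-r^2/2)))
      (g := fun φ : ℝ => if sgn (Real.cos φ) ≠ sgn (Real.cos (φ - θ)) then (1:ℝ) else 0)]
  have hrad : ∫ r in Set.Ioi (0:ℝ), r * ((2*π)⁻¹ * Real.exp (-r^2/2)) = (2*π)⁻¹ := by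
    have heq : (fun r : ℝ => r * ((2*π)⁻¹ * Real.exp (-r^2/2)))
        = fun r : ℝ => (2*π)⁻¹ * (r * Real.exp (-r^2/2)) := by
      funext r; ring
    rw [heq, MeasureTheory.integral_const_mul, radial_integral_one, mul_one]
  rw [hrad, angular_integral hθ0 hθπ]
  field_simp
end Stage5

section Stage6

lemma sgn_ne_sgn_neg_iff (t : ℝ) : sgn t ≠ sgn (-t) ↔ t ≠ 0 := by
  rcases lt_trichotomy t 0 with h | h | h
  · simp only [sgn_of_neg h, sgn_of_nonneg (by linarith : (0:ℝ) ≤ -t)]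
    norm_num
    exact h.ne
  · subst h
    simp [sgn_of_nonneg le_rfl]
  · simp only [sgn_of_nonneg h.le, sgn_of_neg (by linarith : -t < 0)]
    norm_num
    exact h.ne'

lemma disagreement_lower {d : ℕ} (a b : Fin d → ℝ) (ha : ∑ i, a i ^ 2 = 1)
    (hb : ∑ i, b i ^ 2 = 1) :
    Real.sqrt (∑ i, (a i - b i)^2)
      ≤ π * ((stdGaussianPi d)
          {x | sgn (∑ i, a i * x i) ≠ sgn (∑ i, b i * x i)}).toReal := by
  have hπ := Real.pi_pos
  set ρ := ∑ i, a i * b i with hρdef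
  have hCS : ρ^2 ≤ 1 := by
    have := Finset.sum_mul_sq_le_sq_mul_sq Finset.univ a b
    rw [ha, hb] at this
    simpa [hρdef] using this
  have hsum : ∑ i, (a i - b i)^2 = 2 - 2*ρ := by
    have he : ∀ i, (a i - b i)^2 = a i^2 + b i^2 - 2*(a i * b i) := fun i => by ring
    rw [Finset.sum_congr rfl fun i _ => he i, Finset.sum_sub_distrib, Finset.sum_add_distrib,
      ha, hb, ← Finset.mul_sum, ← hρdef]
    ring
  have hPnonneg : (0:ℝ) ≤ ((stdGaussianPi d)
      {x | sgn (∑ i, a i * x i) ≠ sgn (∑ i, b i * x i)}).toReal := ENNReal.toReal_nonneg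
  by_cases hρ1 : ρ = 1
  · rw [hsum, hρ1]
    simp only [mul_one, sub_self]
    rw [Real.sqrt_zero]
    exact mul_nonneg hπ.le hPnonneg
  by_cases hρm1 : ρ = -1
  · -- b = -a, event has probability 1
    have hsum2 : ∑ i, (a i + b i)^2 = 2 + 2*ρ := by
      have he : ∀ i, (a i + b i)^2 = a i^2 + b i^2 + 2*(a i * b i) := fun i => by ring
      rw [Finset.sum_congr rfl fun i _ => he i, Finset.sum_add_distrib, Finset.sum_add_distrib,
        ha, hb, ← Finset.mul_sum, ← hρdef]
      ring
    have hzero : ∑ i, (a i + b i)^2 = 0 := by rw [hsum2, hρm1]; ring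
    have hba : ∀ i, b i = -a i := by
      intro i
      have h := (Finset.sum_eq_zero_iff_of_nonneg fun j _ => sq_nonneg (a j + b j)).mp hzero i
        (Finset.mem_univ i)
      have : a i + b i = 0 := pow_eq_zero_iff two_ne_zero |>.mp h
      linarith
    have hbx : ∀ x : Fin d → ℝ, ∑ i, b i * x i = -(∑ i, a i * x i) := by
      intro x
      rw [← Finset.sum_neg_distrib]
      exact Finset.sum_congr rfl fun i _ => by rw [hba i]; ring
    have hev : {x : Fin d → ℝ | sgn (∑ i, a i * x i) ≠ sgn (∑ i, b i * x i)}
        = (fun x => ∑ i, a i * x i) ⁻¹' ({0}ᶜ) := by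
      ext x
      simp only [Set.mem_setOf_eq, Set.mem_preimage, Set.mem_compl_iff, Set.mem_singleton_iff]
      rw [hbx x]
      exact sgn_ne_sgn_neg_iff _
    have hm : (stdGaussianPi d) {x | sgn (∑ i, a i * x i) ≠ sgn (∑ i, b i * x i)} = 1 := by
      rw [hev, ← Measure.map_apply (measurable_form a) (measurableSet_singleton (0:ℝ)).compl,
        map_form_unit a ha]
      have h0 : (gaussianReal 0 1) {(0:ℝ)} = 0 :=
        gaussianReal_absolutelyContinuous 0 one_ne_zero Real.volume_singleton
      rw [measure_compl (measurableSet_singleton 0) (measure_ne_top _ _), h0, measure_univ]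
      simp
    rw [hm, hsum, hρm1]
    have h4 : Real.sqrt (2 - 2*(-1:ℝ)) = 2 := by
      rw [show (2 - 2*(-1:ℝ)) = 4 by ring]
      rw [show (4:ℝ) = 2^2 by ring, Real.sqrt_sq (by norm_num)]
    rw [h4]
    simp only [ENNReal.toReal_one, mul_one]
    linarith [Real.pi_gt_three]
  · have habs : |ρ| ≤ 1 := by nlinarith [sq_abs ρ, abs_nonneg ρ]
    have hlt : |ρ| < 1 := by
      rcases lt_or_eq_of_le habs with h | h
      · exact h
      · rcases (abs_eq (by norm_num : (0:ℝ) ≤ 1)).mp h with h1 | h1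
        · exact absurd h1 hρ1
        · exact absurd h1 hρm1
    have hqmeas : MeasurableSet {q : ℝ × ℝ | sgn q.1 ≠ sgn q.2} :=
      (measurableSet_eq_fun (measurable_sgn.comp measurable_fst)
        (measurable_sgn.comp measurable_snd)).compl
    have hevent : (stdGaussianPi d) {x | sgn (∑ i, a i * x i) ≠ sgn (∑ i, b i * x i)}
        = ((gaussianReal 0 1).prod (gaussianReal 0 1))
            {p : ℝ × ℝ | sgn p.1 ≠ sgn (ρ * p.1 + Real.sqrt (1 - ρ^2) * p.2)} := by
      have h1 : {x : Fin d → ℝ | sgn (∑ i, a i * x i) ≠ sgn (∑ i, b i * x i)}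
          = (fun x => (∑ i, a i * x i, ∑ i, b i * x i)) ⁻¹' {q : ℝ×ℝ | sgn q.1 ≠ sgn q.2} := rfl
      rw [h1, ← Measure.map_apply ((measurable_form a).prodMk (measurable_form b)) hqmeas,
        map_form_pair a b ha hb hlt,
        Measure.map_apply (f := fun p : ℝ × ℝ =>
          (p.1, (∑ i, a i * b i) * p.1 + Real.sqrt (1 - (∑ i, a i * b i)^2) * p.2))
          (measurable_fst.prodMk ((measurable_fst.const_mul ρ).add
          (measurable_snd.const_mul _))) hqmeas]
      rfl
    have hwedge : ((stdGaussianPi d)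
        {x | sgn (∑ i, a i * x i) ≠ sgn (∑ i, b i * x i)}).toReal = Real.arccos ρ / π := by
      rw [hevent]
      exact wedge_prob hlt
    rw [hwedge, hsum]
    have harccos : 2 - 2*ρ ≤ (Real.arccos ρ)^2 := by
      have h1 := Real.one_sub_sq_div_two_le_cos (x := Real.arccos ρ)
      rw [Real.cos_arccos (by linarith [abs_lt.mp hlt]) (by linarith [abs_lt.mp hlt])] at h1
      linarith
    calc Real.sqrt (2 - 2*ρ) ≤ Real.sqrt ((Real.arccos ρ)^2) := Real.sqrt_le_sqrt harccos
      _ = Real.arccos ρ := Real.sqrt_sq (Real.arccos_nonneg ρ)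
      _ = π * (Real.arccos ρ / π) := by field_simp
end Stage6

lemma relu_sq_bound (a b y : ℝ) :
    (relu a - y)^2 ≤ 2*(relu b - y)^2 + 2*(b - a)^2 := by
  have h1 : |relu a - relu b| ≤ |a - b| := by
    unfold relu
    rw [max_comm 0 a, max_comm 0 b]
    exact abs_max_sub_max_le_abs a b 0
  have h2 : (relu a - relu b)^2 ≤ (a - b)^2 := by
    rw [← sq_abs (relu a - relu b), ← sq_abs (a - b)]
    exact pow_le_pow_left₀ (abs_nonneg _) h1 2
  nlinarith [sq_nonneg ((relu b - y) - (relu a - relu b))]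

lemma relu_sq_le (a : ℝ) : (relu a)^2 ≤ a^2 := by
  unfold relu
  rcases le_or_gt a 0 with h | h
  · rw [max_eq_left h]
    simpa using sq_nonneg a
  · rw [max_eq_right h.le]


/-- Deterministic core of the `O(opt^{2/3})` approximation guarantee: if `D` is a
distribution on `ℝ^d × [0,1]` with Gaussian marginal, `w*` a unit vector with square
loss `opt`, `α > 0`, and `w` a unit vector whose 0/1 error against the `α`-thresholded
labels is at most `β`, then `E[(ReLU(w·x) − y)²] ≤ 2·opt + 2π²·(β + opt/α² + 2α)²`;
in particular, for `α = opt^{1/3}` the bound becomes `2·opt + 2π²·(β + 3·opt^{1/3})²`. -/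
theorem stmt17 (d : ℕ) (D : Measure ((Fin d → ℝ) × ℝ)) [IsProbabilityMeasure D]
    (hmarg : D.map Prod.fst = stdGaussianPi d)
    (hy : ∀ᵐ p : (Fin d → ℝ) × ℝ ∂D, p.2 ∈ Set.Icc (0 : ℝ) 1)
    (wstar : Fin d → ℝ) (hwstar : ∑ i, (wstar i) ^ 2 = 1)
    (opt : ℝ) (hopt : opt = ∫ p : (Fin d → ℝ) × ℝ,
        (relu (∑ i, wstar i * p.1 i) - p.2) ^ 2 ∂D)
    (α : ℝ) (hα : 0 < α)
    (w : Fin d → ℝ) (hw : ∑ i, (w i) ^ 2 = 1)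
    (β : ℝ) (hβ : 0 ≤ β)
    (hβw : (D {p : (Fin d → ℝ) × ℝ |
        sgn (p.2 - α) ≠ sgn (∑ i, w i * p.1 i)}).toReal ≤ β) :
    (∫ p : (Fin d → ℝ) × ℝ, (relu (∑ i, w i * p.1 i) - p.2) ^ 2 ∂D)
      ≤ 2 * opt + 2 * Real.pi ^ 2 * (β + opt / α ^ 2 + 2 * α) ^ 2 ∧
    (α = opt ^ ((1 : ℝ) / 3) →
      (∫ p : (Fin d → ℝ) × ℝ, (relu (∑ i, w i * p.1 i) - p.2) ^ 2 ∂D)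
        ≤ 2 * opt + 2 * Real.pi ^ 2 * (β + 3 * opt ^ ((1 : ℝ) / 3)) ^ 2) := by
  have hπ := Real.pi_pos
  have hrelu_meas : Measurable relu := (continuous_const.max continuous_id).measurable
  -- transfer of squared linear forms to D
  have D_form : ∀ c : Fin d → ℝ,
      Integrable (fun p : (Fin d → ℝ) × ℝ => (∑ i, c i * p.1 i)^2) D ∧
      ∫ p : (Fin d → ℝ) × ℝ, (∑ i, c i * p.1 i)^2 ∂D = ∑ i, c i ^ 2 := by
    intro c
    have hcomp : (fun p : (Fin d → ℝ) × ℝ => (∑ i, c i * p.1 i)^2)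
        = (fun x : Fin d → ℝ => (∑ i, c i * x i)^2) ∘ Prod.fst := rfl
    have hmm := moment_form_sq c
    constructor
    · rw [hcomp, ← integrable_map_measure (by rw [hmarg]; exact hmm.1.aestronglyMeasurable)
        measurable_fst.aemeasurable, hmarg]
      exact hmm.1
    · have := integral_map (μ := D) measurable_fst.aemeasurable
        (f := fun x : Fin d → ℝ => (∑ i, c i * x i)^2)
        (by rw [hmarg]; exact hmm.1.aestronglyMeasurable)
      rw [hmarg] at this
      exact this.symm.trans hmm.2
  set u : (Fin d → ℝ) × ℝ → ℝ := fun p => ∑ i, w i * p.1 i with hu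
  set v : (Fin d → ℝ) × ℝ → ℝ := fun p => ∑ i, wstar i * p.1 i with hv
  have hu_meas : Measurable u := (measurable_form w).comp measurable_fst
  have hv_meas : Measurable v := (measurable_form wstar).comp measurable_fst
  -- integrability of the losses
  have hloss_int : ∀ (c : Fin d → ℝ),
      Integrable (fun p : (Fin d → ℝ) × ℝ => (relu (∑ i, c i * p.1 i) - p.2)^2) D := by
    intro c
    have hmeas : Measurable fun p : (Fin d → ℝ) × ℝ => (relu (∑ i, c i * p.1 i) - p.2)^2 :=
      ((hrelu_meas.comp ((measurable_form c).comp measurable_fst)).sub measurable_snd).pow_const 2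
    refine Integrable.mono' (((D_form c).1.const_mul 2).add (integrable_const 2))
      hmeas.aestronglyMeasurable ?_
    filter_upwards [hy] with p hyp
    obtain ⟨hy0, hy1⟩ := hyp
    rw [Real.norm_eq_abs, abs_of_nonneg (sq_nonneg _)]
    have h1 : (relu (∑ i, c i * p.1 i))^2 ≤ (∑ i, c i * p.1 i)^2 := relu_sq_le _
    simp only [Pi.add_apply]
    nlinarith [sq_nonneg (relu (∑ i, c i * p.1 i) + p.2), sq_nonneg p.2]
  have hIv := hloss_int wstar
  have hIu := hloss_int w
  have hopt0 : 0 ≤ opt := hopt ▸ integral_nonneg fun p => sq_nonneg _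
  -- the main bound as a function of an arbitrary positive threshold
  have main : ∀ α' : ℝ, 0 < α' →
      (D {p : (Fin d → ℝ) × ℝ | sgn (p.2 - α') ≠ sgn (u p)}).toReal ≤ β →
      (∫ p : (Fin d → ℝ) × ℝ, (relu (u p) - p.2) ^ 2 ∂D)
        ≤ 2 * opt + 2 * π ^ 2 * (β + opt / α' ^ 2 + 2 * α') ^ 2 := by
    intro α' hα' hβw'
    set A1 : Set ((Fin d → ℝ) × ℝ) := {p | α'^2 ≤ (relu (v p) - p.2)^2} with hA1def
    set A2 : Set ((Fin d → ℝ) × ℝ) := {p | p.1 ∈ (fun x => ∑ i, wstar i * x i) ⁻¹' Set.Ico 0 (2*α')} with hA2def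
    have hA1meas : MeasurableSet A1 :=
      measurableSet_le measurable_const
        (((hrelu_meas.comp hv_meas).sub measurable_snd).pow_const 2)
    have hA2meas : MeasurableSet A2 :=
      measurable_fst ((measurable_form wstar) measurableSet_Ico)
    -- Markov
    have hA1bound : (D A1).toReal ≤ opt / α'^2 := by
      have hm := mul_meas_ge_le_integral_of_nonneg
        (Filter.Eventually.of_forall fun p => sq_nonneg (relu (v p) - p.2)) hIv (α'^2)
      rw [← hopt] at hm
      rw [le_div_iff₀ (by positivity)]
      calc (D A1).toReal * α'^2 = α'^2 * (D A1).toReal := by ring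
        _ ≤ opt := hm
    -- Gaussian anticoncentration
    have hA2bound : (D A2).toReal ≤ 2*α' := by
      have hmap : D A2 = (gaussianReal 0 1) (Set.Ico 0 (2*α')) := by
        rw [hA2def]
        have h1 : {p : (Fin d → ℝ) × ℝ | p.1 ∈ (fun x => ∑ i, wstar i * x i) ⁻¹' Set.Ico 0 (2*α')}
            = Prod.fst ⁻¹' ((fun x => ∑ i, wstar i * x i) ⁻¹' Set.Ico 0 (2*α')) := rfl
        rw [h1, ← Measure.map_apply measurable_fst ((measurable_form wstar) measurableSet_Ico),
          hmarg, ← Measure.map_apply (measurable_form wstar) measurableSet_Ico,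
          map_form_unit wstar hwstar]
      rw [hmap]
      calc ((gaussianReal 0 1) (Set.Ico 0 (2*α'))).toReal ≤ 2*α' - 0 :=
            gaussian_Ico_bound (by linarith)
        _ = 2*α' := by ring
    -- threshold comparison event for wstar
    set E2 : Set ((Fin d → ℝ) × ℝ) := {p | sgn (p.2 - α') ≠ sgn (v p)} with hE2def
    have hE2meas : MeasurableSet E2 :=
      (measurableSet_eq_fun (measurable_sgn.comp (measurable_snd.sub_const α'))
        (measurable_sgn.comp hv_meas)).compl
    have hE2sub : ∀ᵐ p ∂D, p ∈ E2 → p ∈ A1 ∪ A2 := by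
      filter_upwards [hy] with p hyp hpE2
      obtain ⟨hy0, hy1⟩ := hyp
      have hpE2' : sgn (p.2 - α') ≠ sgn (v p) := hpE2
      rcases le_or_gt 0 (p.2 - α') with hyα | hyα
      · have hsy : sgn (p.2 - α') = 1 := sgn_of_nonneg hyα
        have hvneg : v p < 0 := by
          by_contra hcon
          push_neg at hcon
          exact hpE2' (by rw [hsy, sgn_of_nonneg hcon])
        refine Set.mem_union_left _ ?_
        show α'^2 ≤ (relu (v p) - p.2)^2
        have hrelu0 : relu (v p) = 0 := max_eq_left hvneg.le
        rw [hrelu0]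
        nlinarith
      · have hsy : sgn (p.2 - α') = -1 := sgn_of_neg (by linarith)
        have hvpos : 0 ≤ v p := by
          by_contra hcon
          push_neg at hcon
          exact hpE2' (by rw [hsy, sgn_of_neg hcon])
        rcases lt_or_ge (v p) (2*α') with hv2 | hv2
        · exact Set.mem_union_right _ ⟨hvpos, hv2⟩
        · refine Set.mem_union_left _ ?_
          show α'^2 ≤ (relu (v p) - p.2)^2
          have hrelu1 : relu (v p) = v p := max_eq_right hvpos
          rw [hrelu1]
          nlinarith
    have hnull : D (E2 \ (A1 ∪ A2)) = 0 := by
      have h := hE2sub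
      rw [ae_iff] at h
      refine measure_mono_null ?_ h
      intro p hp
      simp only [Set.mem_setOf_eq]
      exact fun himp => hp.2 (himp hp.1)
    have hE2le : D E2 ≤ D (A1 ∪ A2) := by
      calc D E2 ≤ D ((A1 ∪ A2) ∪ (E2 \ (A1 ∪ A2))) := by
            refine measure_mono fun p hp => ?_
            by_cases hU : p ∈ A1 ∪ A2
            · exact Or.inl hU
            · exact Or.inr ⟨hp, hU⟩
        _ ≤ D (A1 ∪ A2) + D (E2 \ (A1 ∪ A2)) := measure_union_le _ _
        _ = D (A1 ∪ A2) := by rw [hnull, add_zero]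
    have htoReal_union : (D E2).toReal ≤ (D A1).toReal + (D A2).toReal := by
      calc (D E2).toReal ≤ (D (A1 ∪ A2)).toReal :=
            ENNReal.toReal_mono (measure_ne_top _ _) hE2le
        _ ≤ ((D A1) + (D A2)).toReal :=
            ENNReal.toReal_mono (by
              exact ENNReal.add_ne_top.mpr ⟨measure_ne_top _ _, measure_ne_top _ _⟩)
              (measure_union_le _ _)
        _ = (D A1).toReal + (D A2).toReal :=
            ENNReal.toReal_add (measure_ne_top _ _) (measure_ne_top _ _)
    have hE2bound : (D E2).toReal ≤ opt / α'^2 + 2*α' := by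
      calc (D E2).toReal ≤ (D A1).toReal + (D A2).toReal := htoReal_union
        _ ≤ opt / α'^2 + 2*α' := add_le_add hA1bound hA2bound
    -- disagreement event
    set Edis : Set ((Fin d → ℝ) × ℝ) := {p | sgn (u p) ≠ sgn (v p)} with hEdisdef
    set E1 : Set ((Fin d → ℝ) × ℝ) := {p | sgn (p.2 - α') ≠ sgn (u p)} with hE1def
    have hsubset : Edis ⊆ E1 ∪ E2 := by
      intro p hp
      by_contra hcon
      simp only [Set.mem_union, not_or] at hcon
      obtain ⟨h1, h2⟩ := hcon
      have h1' : sgn (p.2 - α') = sgn (u p) := not_not.mp h1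
      have h2' : sgn (p.2 - α') = sgn (v p) := not_not.mp h2
      exact hp (h1' ▸ h2')
    have hE1meas : MeasurableSet E1 :=
      (measurableSet_eq_fun (measurable_sgn.comp (measurable_snd.sub_const α'))
        (measurable_sgn.comp hu_meas)).compl
    have hdis_bound : (D Edis).toReal ≤ β + (opt / α'^2 + 2*α') := by
      calc (D Edis).toReal ≤ ((D E1) + (D E2)).toReal :=
            ENNReal.toReal_mono
              (ENNReal.add_ne_top.mpr ⟨measure_ne_top _ _, measure_ne_top _ _⟩)
              (le_trans (measure_mono hsubset) (measure_union_le _ _))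
        _ = (D E1).toReal + (D E2).toReal :=
            ENNReal.toReal_add (measure_ne_top _ _) (measure_ne_top _ _)
        _ ≤ β + (opt / α'^2 + 2*α') := add_le_add hβw' hE2bound
    -- identify Edis with the Gaussian event
    have hXmeas : MeasurableSet {x : Fin d → ℝ | sgn (∑ i, w i * x i) ≠ sgn (∑ i, wstar i * x i)} :=
      (measurableSet_eq_fun (measurable_sgn.comp (measurable_form w))
        (measurable_sgn.comp (measurable_form wstar))).compl
    have hEdis_eq : (D Edis).toReal = ((stdGaussianPi d)
        {x : Fin d → ℝ | sgn (∑ i, w i * x i) ≠ sgn (∑ i, wstar i * x i)}).toReal := by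
      have h1 : Edis = Prod.fst ⁻¹'
          {x : Fin d → ℝ | sgn (∑ i, w i * x i) ≠ sgn (∑ i, wstar i * x i)} := rfl
      rw [h1, ← Measure.map_apply measurable_fst hXmeas, hmarg]
    -- geometry
    have hgeom := disagreement_lower w wstar hw hwstar
    have hγ : (0:ℝ) ≤ β + (opt / α'^2 + 2*α') := by positivity
    have hdist : ∑ i, (wstar i - w i)^2 ≤ π^2 * (β + opt / α'^2 + 2*α')^2 := by
      have hsq : ∑ i, (wstar i - w i)^2 = ∑ i, (w i - wstar i)^2 :=
        Finset.sum_congr rfl fun i _ => by ring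
      have hchain : Real.sqrt (∑ i, (w i - wstar i)^2) ≤ π * (β + (opt / α'^2 + 2*α')) := by
        calc Real.sqrt (∑ i, (w i - wstar i)^2)
            ≤ π * ((stdGaussianPi d)
              {x : Fin d → ℝ | sgn (∑ i, w i * x i) ≠ sgn (∑ i, wstar i * x i)}).toReal := hgeom
          _ = π * (D Edis).toReal := by rw [hEdis_eq]
          _ ≤ π * (β + (opt / α'^2 + 2*α')) := by
              exact mul_le_mul_of_nonneg_left hdis_bound hπ.le
      have h2 : ∑ i, (w i - wstar i)^2 ≤ (π * (β + (opt / α'^2 + 2*α')))^2 := by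
        have := pow_le_pow_left₀ (Real.sqrt_nonneg _) hchain 2
        rwa [Real.sq_sqrt (Finset.sum_nonneg fun i _ => sq_nonneg _)] at this
      rw [hsq]
      calc ∑ i, (w i - wstar i)^2 ≤ (π * (β + (opt / α'^2 + 2*α')))^2 := h2
        _ = π^2 * (β + opt / α'^2 + 2*α')^2 := by ring
    -- pointwise comparison and integration
    have hdiff_int := (D_form (fun i => wstar i - w i))
    have hpoint : ∀ p : (Fin d → ℝ) × ℝ,
        (relu (u p) - p.2)^2
          ≤ 2*(relu (v p) - p.2)^2 + 2*(∑ i, (wstar i - w i) * p.1 i)^2 := by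
      intro p
      have hdiffeq : v p - u p = ∑ i, (wstar i - w i) * p.1 i := by
        rw [hu, hv]
        dsimp only
        rw [← Finset.sum_sub_distrib]
        exact Finset.sum_congr rfl fun i _ => by ring
      have := relu_sq_bound (u p) (v p) p.2
      rwa [hdiffeq] at this
    have hRHS_int : Integrable (fun p : (Fin d → ℝ) × ℝ =>
        2*(relu (v p) - p.2)^2 + 2*(∑ i, (wstar i - w i) * p.1 i)^2) D :=
      (hIv.const_mul 2).add (hdiff_int.1.const_mul 2)
    calc ∫ p : (Fin d → ℝ) × ℝ, (relu (u p) - p.2)^2 ∂D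
        ≤ ∫ p : (Fin d → ℝ) × ℝ,
            (2*(relu (v p) - p.2)^2 + 2*(∑ i, (wstar i - w i) * p.1 i)^2) ∂D :=
          integral_mono hIu hRHS_int hpoint
      _ = 2 * (∫ p : (Fin d → ℝ) × ℝ, (relu (v p) - p.2)^2 ∂D)
          + 2 * (∫ p : (Fin d → ℝ) × ℝ, (∑ i, (wstar i - w i) * p.1 i)^2 ∂D) := by
          rw [integral_add (hIv.const_mul 2) (hdiff_int.1.const_mul 2),
            MeasureTheory.integral_const_mul, MeasureTheory.integral_const_mul]
      _ = 2 * opt + 2 * (∑ i, (wstar i - w i)^2) := by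
          rw [← hopt, hdiff_int.2]
      _ ≤ 2 * opt + 2 * (π^2 * (β + opt / α'^2 + 2*α')^2) := by linarith
      _ = 2 * opt + 2 * π^2 * (β + opt / α'^2 + 2*α')^2 := by ring
  constructor
  · exact main α hα hβw
  · intro hα3
    have hoptpos : 0 < opt := by
      rcases hopt0.lt_or_eq with h | h
      · exact h
      · exfalso
        rw [← h] at hα3
        rw [Real.zero_rpow (by norm_num : (1:ℝ)/3 ≠ 0)] at hα3
        exact absurd hα3 hα.ne'
    have hαsq : α^2 = opt ^ ((2:ℝ)/3) := by
      rw [hα3, ← Real.rpow_natCast (opt ^ ((1:ℝ)/3)) 2, ← Real.rpow_mul hopt0]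
      norm_num
    have hdiv : opt / α^2 = opt ^ ((1:ℝ)/3) := by
      have h := Real.rpow_sub hoptpos 1 ((2:ℝ)/3)
      rw [Real.rpow_one] at h
      rw [hαsq, ← h, show (1:ℝ) - 2/3 = 1/3 by norm_num]
    have heq : β + opt / α^2 + 2*α = β + 3 * opt ^ ((1:ℝ)/3) := by
      rw [hdiv, hα3]
      ring
    have := main α hα hβw
    rwa [heq] at this
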